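/- Let (M; ∨, ∧, ⊕, ⊖, 0) be a wEMV-algebra with M ≠ {0}. Then: (i) for each x ∈ M with x ≠ 0 there exists a prime ideal P of M such that x ∉ P; (ii) the intersection of all prime ideals of M equals {0}. -/
import Mathlib


universe u

class WEMV (M : Type u) extends DistribLattice M, Zero M where
  oplus : M → M → M
  ominus : M → M → M
  zero_le : ∀ x : M, 0 ≤ x
  oplus_comm : ∀ x y : M, oplus x y = oplus y x
  oplus_assoc : ∀ x y z : M, oplus (oplus x y) z = oplus x (oplus y z)
  oplus_zero : ∀ x : M, oplus x 0 = x
  ominus_oplus_le : ∀ x y : M, ominus (oplus x y) x ≤ y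
  oplus_ominus : ∀ x y : M, oplus x (ominus y x) = x ⊔ y
  ominus_inf : ∀ x y : M, ominus x (x ⊓ y) = ominus x y
  ominus_ominus : ∀ x z : M, ominus z (ominus z x) = x ⊓ z
  ominus_sup : ∀ x y z : M, ominus z (x ⊔ y) = ominus z x ⊓ ominus z y
  inf_ominus : ∀ x y z : M, ominus (x ⊓ y) z = ominus x z ⊓ ominus y z
  ominus_oplus_assoc : ∀ x y z : M, ominus x (oplus y z) = ominus (ominus x y) z
  oplus_sup : ∀ x y z : M, oplus x (y ⊔ z) = oplus x y ⊔ oplus x z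

open WEMV

def IsIdeal {M : Type u} [WEMV M] (I : Set M) : Prop :=
  I.Nonempty ∧ (∀ x y : M, y ≤ x → x ∈ I → y ∈ I) ∧ ∀ x ∈ I, ∀ y ∈ I, oplus x y ∈ I

def IsPrimeIdeal {M : Type u} [WEMV M] (P : Set M) : Prop :=
  IsIdeal P ∧ ∀ x y : M, x ⊓ y ∈ P → x ∈ P ∨ y ∈ P

namespace WEMVAux

variable {M : Type u} [WEMV M]

theorem oplus_mono_right {u v : M} (x : M) (h : u ≤ v) : oplus x u ≤ oplus x v := by
  have : oplus x v = oplus x u ⊔ oplus x v := by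
    rw [← oplus_sup, sup_eq_right.2 h]
  rw [this]; exact le_sup_left

theorem oplus_mono_left {u v : M} (x : M) (h : u ≤ v) : oplus u x ≤ oplus v x := by
  rw [oplus_comm u x, oplus_comm v x]; exact oplus_mono_right x h

theorem le_oplus_left (x y : M) : x ≤ oplus x y := by
  have := oplus_mono_right x (WEMV.zero_le y)
  rwa [oplus_zero] at this

theorem le_oplus_right (x y : M) : y ≤ oplus x y := by
  rw [oplus_comm]; exact le_oplus_left y x

theorem ominus_self (x : M) : ominus x x = (0 : M) := by
  refine le_antisymm ?_ (WEMV.zero_le _)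
  have := ominus_oplus_le x (0 : M)
  rwa [oplus_zero] at this

theorem ominus_le_self (x y : M) : ominus x y ≤ x := by
  have h1 : ominus x (ominus x (ominus x y)) = ominus x y ⊓ x := ominus_ominus _ _
  have h2 : ominus x (ominus x y) = y ⊓ x := ominus_ominus _ _
  have h3 : ominus x (y ⊓ x) = ominus x y ⊓ x := by rw [← h2, h1]
  have h4 : ominus x (x ⊓ y) = ominus x y := ominus_inf _ _
  rw [inf_comm x y] at h4
  rw [h4] at h3
  calc ominus x y = ominus x y ⊓ x := h3
    _ ≤ x := inf_le_right

theorem ominus_anti {v w : M} (z : M) (h : v ≤ w) : ominus z w ≤ ominus z v := by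
  have : ominus z w = ominus z v ⊓ ominus z w := by
    rw [← ominus_sup, sup_eq_right.2 h]
  rw [this]; exact inf_le_left

theorem ominus_mono {u v : M} (z : M) (h : u ≤ v) : ominus u z ≤ ominus v z := by
  have : ominus u z = ominus u z ⊓ ominus v z := by
    rw [← inf_ominus, inf_eq_left.2 h]
  rw [this]; exact inf_le_right

theorem le_oplus_ominus (x y : M) : y ≤ oplus x (ominus y x) := by
  rw [oplus_ominus]; exact le_sup_right

/-- Key distributivity inequality. -/
theorem inf_oplus_le (x y z : M) : x ⊓ oplus y z ≤ oplus (x ⊓ y) (x ⊓ z) := by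
  set t := x ⊓ oplus y z with ht
  have htx : t ≤ x := inf_le_left
  have h1 : t ≤ oplus (x ⊓ y) (ominus t (x ⊓ y)) := le_oplus_ominus _ _
  have h2 : ominus t (x ⊓ y) ≤ ominus t (t ⊓ y) :=
    ominus_anti t (inf_le_inf_right y htx)
  rw [ominus_inf] at h2
  have h3 : ominus t y ≤ z :=
    le_trans (ominus_mono y (inf_le_right : t ≤ oplus y z)) (ominus_oplus_le y z)
  have h4 : ominus t y ≤ x := le_trans (ominus_le_self t y) htx
  have h5 : ominus t (x ⊓ y) ≤ x ⊓ z := le_trans h2 (le_inf h4 h3)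
  exact le_trans h1 (oplus_mono_right _ h5)

def nmul : ℕ → M → M
  | 0, _ => 0
  | (n+1), a => oplus a (nmul n a)

theorem nmul_mono : ∀ (n : ℕ) {u v : M}, u ≤ v → nmul n u ≤ nmul n v
  | 0, _, _, _ => le_refl _
  | (n+1), u, v, h =>
    le_trans (oplus_mono_left _ h) (oplus_mono_right _ (nmul_mono n h))

theorem nmul_inf_le : ∀ (n : ℕ) (a b : M), nmul n a ⊓ b ≤ nmul n (a ⊓ b)
  | 0, a, b => inf_le_left
  | (n+1), a, b => by
    have h1 : nmul (n+1) a ⊓ b = b ⊓ oplus a (nmul n a) := by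
      rw [inf_comm]; rfl
    rw [h1]
    refine le_trans (inf_oplus_le b a (nmul n a)) ?_
    have h2 : b ⊓ a ≤ a ⊓ b := by rw [inf_comm]
    have h3 : b ⊓ nmul n a ≤ nmul n (a ⊓ b) := by
      rw [inf_comm]; exact nmul_inf_le n a b
    exact le_trans (oplus_mono_right _ h3) (oplus_mono_left _ h2)

theorem zero_mem_of_ideal {I : Set M} (hI : IsIdeal I) : (0 : M) ∈ I := by
  obtain ⟨⟨w, hw⟩, hdown, _⟩ := hI
  exact hdown w 0 (WEMV.zero_le w) hw

theorem nmul_mem_of_ideal {I : Set M} (hI : IsIdeal I) {a : M} (ha : a ∈ I) :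
    ∀ n : ℕ, nmul n a ∈ I
  | 0 => zero_mem_of_ideal hI
  | (n+1) => hI.2.2 a ha _ (nmul_mem_of_ideal hI ha n)

/-- Ideal generated by an ideal `I` and an element `a`. -/
def genIdeal (I : Set M) (a : M) : Set M :=
  {y | ∃ i ∈ I, ∃ n : ℕ, y ≤ oplus i (nmul n a)}

theorem genIdeal_isIdeal {I : Set M} (hI : IsIdeal I) (a : M) :
    IsIdeal (genIdeal I a) := by
  refine ⟨⟨0, 0, zero_mem_of_ideal hI, 0, WEMV.zero_le _⟩, ?_, ?_⟩
  · rintro x y hyx ⟨i, hi, n, hx⟩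
    exact ⟨i, hi, n, le_trans hyx hx⟩
  · rintro x ⟨i, hi, n, hx⟩ y ⟨j, hj, m, hy⟩
    refine ⟨oplus i j, hI.2.2 i hi j hj, n + m, ?_⟩
    have h1 : oplus x y ≤ oplus (oplus i (nmul n a)) (oplus j (nmul m a)) :=
      le_trans (oplus_mono_left _ hx) (oplus_mono_right _ hy)
    have hadd : ∀ p q : ℕ, nmul (p + q) a = oplus (nmul p a) (nmul q a) := by
      intro p q
      induction p with
      | zero =>
        rw [Nat.zero_add]
        show nmul q a = oplus 0 (nmul q a)
        rw [oplus_comm, oplus_zero]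
      | succ k ih =>
        rw [show (k+1) + q = (k+q)+1 from by omega]
        show oplus a (nmul (k+q) a) = oplus (oplus a (nmul k a)) (nmul q a)
        rw [ih, oplus_assoc]
    have h2 : oplus (oplus i (nmul n a)) (oplus j (nmul m a)) =
        oplus (oplus i j) (nmul (n + m) a) := by
      rw [hadd n m, oplus_assoc, ← oplus_assoc (nmul n a), oplus_comm (nmul n a) j,
        oplus_assoc j, ← oplus_assoc i]
    rw [← h2]; exact h1

theorem self_subset_genIdeal {I : Set M} (hI : IsIdeal I) (a : M) :
    I ⊆ genIdeal I a := by
  intro y hy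
  exact ⟨y, hy, 0, by rw [show nmul 0 a = (0:M) from rfl, oplus_zero]⟩

theorem mem_genIdeal_self {I : Set M} (hI : IsIdeal I) (a : M) :
    a ∈ genIdeal I a := by
  refine ⟨0, zero_mem_of_ideal hI, 1, ?_⟩
  rw [show nmul 1 a = oplus a (0:M) from rfl, oplus_zero, oplus_comm, oplus_zero]

end WEMVAux

open WEMVAux

theorem stmt12 {M : Type u} [WEMV M] (hnz : ∃ x : M, x ≠ 0) :
    (∀ x : M, x ≠ 0 → ∃ P : Set M, IsPrimeIdeal P ∧ x ∉ P) ∧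
    ⋂₀ {P : Set M | IsPrimeIdeal P} = {(0 : M)} := by
  have main : ∀ x : M, x ≠ 0 → ∃ P : Set M, IsPrimeIdeal P ∧ x ∉ P := by
    intro x hx
    -- Zorn's lemma on ideals not containing x
    set S : Set (Set M) := {I | IsIdeal I ∧ x ∉ I} with hS
    have hzero : ({0} : Set M) ∈ S := by
      constructor
      · refine ⟨⟨0, rfl⟩, ?_, ?_⟩
        · rintro u y hyu rfl
          exact le_antisymm hyu (WEMV.zero_le y)
        · rintro u rfl y rfl
          simp [oplus_zero]
      · simpa using hx
    have hub : ∀ c ⊆ S, IsChain (· ⊆ ·) c → c.Nonempty →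
        ∃ ub ∈ S, ∀ s ∈ c, s ⊆ ub := by
      intro c hcS hchain hcne
      refine ⟨⋃₀ c, ⟨⟨?_, ?_, ?_⟩, ?_⟩, fun s hs => Set.subset_sUnion_of_mem hs⟩
      · obtain ⟨I, hI⟩ := hcne
        obtain ⟨w, hw⟩ := (hcS hI).1.1
        exact ⟨w, I, hI, hw⟩
      · rintro u y hyu ⟨I, hI, huI⟩
        exact ⟨I, hI, (hcS hI).1.2.1 u y hyu huI⟩
      · rintro u ⟨I, hI, huI⟩ y ⟨J, hJ, hyJ⟩
        rcases hchain.total hI hJ with h | h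
        · exact ⟨J, hJ, (hcS hJ).1.2.2 u (h huI) y hyJ⟩
        · exact ⟨I, hI, (hcS hI).1.2.2 u huI y (h hyJ)⟩
      · rintro ⟨I, hI, hxI⟩
        exact (hcS hI).2 hxI
    obtain ⟨P, -, hPm⟩ := zorn_subset_nonempty S hub _ hzero
    have hPS : P ∈ S := hPm.1
    have hPmax : ∀ ⦃J : Set M⦄, J ∈ S → P ⊆ J → J ⊆ P := fun J hJ h => hPm.2 hJ h
    refine ⟨P, ⟨hPS.1, ?_⟩, hPS.2⟩
    -- primeness
    intro a b hab
    by_contra hcon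
    push_neg at hcon
    obtain ⟨ha, hb⟩ := hcon
    have hIdeal := hPS.1
    -- x belongs to the ideal generated by P and a
    have hxa : x ∈ genIdeal P a := by
      by_contra hxa
      have : genIdeal P a ⊆ P :=
        hPmax ⟨genIdeal_isIdeal hIdeal a, hxa⟩ (self_subset_genIdeal hIdeal a)
      exact ha (this (mem_genIdeal_self hIdeal a))
    have hxb : x ∈ genIdeal P b := by
      by_contra hxb
      have : genIdeal P b ⊆ P :=
        hPmax ⟨genIdeal_isIdeal hIdeal b, hxb⟩ (self_subset_genIdeal hIdeal b)
      exact hb (this (mem_genIdeal_self hIdeal b))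
    obtain ⟨p, hp, n, hxn⟩ := hxa
    obtain ⟨q, hq, m, hxm⟩ := hxb
    -- derive x ∈ P
    have h1 : ominus x p ≤ nmul n a :=
      le_trans (ominus_mono p hxn) (ominus_oplus_le p (nmul n a))
    have h2 : ominus (ominus x p) q ≤ nmul m b := by
      have : ominus x p ≤ oplus q (nmul m b) :=
        le_trans (ominus_le_self x p) hxm
      exact le_trans (ominus_mono q this) (ominus_oplus_le q (nmul m b))
    have h3 : ominus (ominus x p) q ≤ nmul n a ⊓ nmul m b :=
      le_inf (le_trans (ominus_le_self _ q) h1) h2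
    have h4 : nmul n a ⊓ nmul m b ≤ nmul n (nmul m (b ⊓ a)) := by
      refine le_trans (nmul_inf_le n a (nmul m b)) (nmul_mono n ?_)
      rw [inf_comm]
      exact nmul_inf_le m b a
    have hmem : nmul n (nmul m (b ⊓ a)) ∈ P := by
      have hba : b ⊓ a ∈ P := by rw [inf_comm]; exact hab
      exact nmul_mem_of_ideal hIdeal (nmul_mem_of_ideal hIdeal hba m) n
    have hr : ominus (ominus x p) q ∈ P :=
      hIdeal.2.1 _ _ (le_trans h3 h4) hmem
    have hx1 : ominus x p ∈ P := by
      have : ominus x p ≤ oplus q (ominus (ominus x p) q) := le_oplus_ominus _ _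
      exact hIdeal.2.1 _ _ this (hIdeal.2.2 q hq _ hr)
    have hx2 : x ∈ P := by
      have : x ≤ oplus p (ominus x p) := le_oplus_ominus _ _
      exact hIdeal.2.1 _ _ this (hIdeal.2.2 p hp _ hx1)
    exact hPS.2 hx2
  refine ⟨main, ?_⟩
  ext y
  simp only [Set.mem_sInter, Set.mem_setOf_eq, Set.mem_singleton_iff]
  constructor
  · intro hy
    by_contra hy0
    obtain ⟨P, hP, hyP⟩ := main y hy0
    exact hyP (hy P hP)
  · rintro rfl P hP
    exact zero_mem_of_ideal hP.1
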